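/- arXiv:1311.5642 — 2 statements merged into one kernel-verified Lean document; each statement's English description precedes it below -/
import Mathlib

section
/- For h ≥ 2, the configuration space F_h^i(k,n) is nonempty if and only if k + 1 ≤ i ≤ min(hk, n). -/
set_option linter.unusedSectionVars false
set_option linter.unusedVariables false

open Module Submodule

def dv (n p : ℕ) : Fin n → ℂ := fun q => if (q : ℕ) = p then 1 else 0

lemma dv_apply (n p : ℕ) (q : Fin n) : dv n p q = if (q : ℕ) = p then 1 else 0 := rfl

lemma li_aux {n K : ℕ} (idx : Fin K → ℕ)
    (hlt : ∀ m, idx m < n) (w : Fin K → Fin n → ℂ)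
    (hw : ∀ m m' : Fin K, w m ⟨idx m', hlt m'⟩ = if m' = m then 1 else 0) :
    LinearIndependent ℂ w := by
  rw [Fintype.linearIndependent_iff]
  intro g hg m'
  have h := congrFun hg ⟨idx m', hlt m'⟩
  simpa [Finset.sum_apply, hw, mul_ite] using h

section constr

variable (n k h i : ℕ)

def svals (j : Fin h) : ℕ := min (j * k) (i - k)
def cvals (j : Fin h) : ℕ := j * k - (i - k)
noncomputable def vvec (j : Fin h) (m : Fin k) : Fin n → ℂ :=
  dv n (svals k h i j + m) + (cvals k h i j : ℂ) •
    (if (m : ℕ) = 0 then dv n (i - k - 1) else 0)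
noncomputable def subsp (j : Fin h) : Submodule ℂ (Fin n → ℂ) := span ℂ (Set.range (vvec n k h i j))

variable (hk : 0 < k) (hki : k + 1 ≤ i) (hin : i ≤ n) (hih : i ≤ h * k)

include hki hin in
lemma svals_add_lt (j : Fin h) (m : Fin k) : svals k h i j + (m : ℕ) < n := by
  have h1 : svals k h i j ≤ i - k := min_le_right _ _
  have h2 := m.2
  omega

include hki in
lemma svals_eq_of_cvals_ne (j : Fin h) (hc : cvals k h i j ≠ 0) : svals k h i j = i - k := by
  unfold cvals at hc
  unfold svals
  omega

include hki hin in
lemma vvec_apply_idx (j : Fin h) (m m' : Fin k) :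
    vvec n k h i j m ⟨svals k h i j + m', svals_add_lt n k h i hki hin j m'⟩
      = if m' = m then 1 else 0 := by
  have key : ((cvals k h i j : ℂ) •
      (if (m : ℕ) = 0 then dv n (i - k - 1) else 0))
        ⟨svals k h i j + m', svals_add_lt n k h i hki hin j m'⟩ = 0 := by
    rcases eq_or_ne (cvals k h i j) 0 with hc | hc
    · simp [hc]
    · have hs := svals_eq_of_cvals_ne k h i hki j hc
      have : svals k h i j + (m' : ℕ) ≠ i - k - 1 := by omega
      split
      · simp [dv_apply, this]
      · simp
  simp only [vvec, Pi.add_apply, key, add_zero, dv_apply]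
  have : ((svals k h i j + m' : ℕ) = svals k h i j + m) ↔ (m' = m) := by
    constructor
    · intro hh; exact Fin.ext (by omega)
    · intro hh; rw [hh]
  simp [this, Fin.val_inj]

include hki hin in
lemma li_vvec (j : Fin h) : LinearIndependent ℂ (vvec n k h i j) :=
  li_aux (fun m => svals k h i j + m) (svals_add_lt n k h i hki hin j)
    _ (vvec_apply_idx n k h i hki hin j)

include hki hin in
lemma finrank_subsp (j : Fin h) : finrank ℂ (subsp n k h i j) = k := by
  rw [subsp, finrank_span_eq_card (li_vvec n k h i hki hin j)]
  simp

end constr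

section constr2

variable (n k h i : ℕ)

lemma vvec_apply (j : Fin h) (m : Fin k) (q : Fin n) :
    vvec n k h i j m q = (if (q : ℕ) = svals k h i j + m then 1 else 0) +
      (cvals k h i j : ℂ) *
        (if (m : ℕ) = 0 then (if (q : ℕ) = i - k - 1 then 1 else 0) else 0) := by
  rcases eq_or_ne (m : ℕ) 0 with hm | hm <;>
    simp [vvec, hm, dv_apply, mul_ite]

variable (hk : 0 < k) (hki : k + 1 ≤ i) (hin : i ≤ n) (hih : i ≤ h * k)

include hk hki hin in
lemma key1 (j j' : Fin h) (hss : svals k h i j < svals k h i j') :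
    subsp n k h i j ≠ subsp n k h i j' := by
  intro heq
  have hqlt : svals k h i j' + ((⟨k - 1, by omega⟩ : Fin k) : ℕ) < n :=
    svals_add_lt n k h i hki hin j' ⟨k - 1, by omega⟩
  set q : Fin n := ⟨svals k h i j' + (k - 1), hqlt⟩ with hq
  have hker : subsp n k h i j ≤
      LinearMap.ker (LinearMap.proj (R := ℂ) (φ := fun _ : Fin n => ℂ) q) := by
    rw [subsp, span_le]
    rintro _ ⟨m, rfl⟩
    simp only [SetLike.mem_coe, LinearMap.mem_ker, LinearMap.proj_apply]
    rw [vvec_apply]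
    have hc : cvals k h i j = 0 := by
      have h1 : svals k h i j' ≤ i - k := min_le_right _ _
      unfold cvals
      unfold svals at hss
      omega
    have hne : ¬ ((q : ℕ) = svals k h i j + m) := by
      have := m.2
      simp only [hq]
      omega
    simp [hne, hc]
  have hmem : vvec n k h i j' ⟨k - 1, by omega⟩ ∈ subsp n k h i j' :=
    subset_span ⟨_, rfl⟩
  rw [← heq] at hmem
  have hval := hker hmem
  rw [LinearMap.mem_ker, LinearMap.proj_apply, vvec_apply] at hval
  have h1 : ((q : ℕ) = svals k h i j' + ((⟨k - 1, by omega⟩ : Fin k) : ℕ)) := rfl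
  rw [if_pos h1] at hval
  rcases eq_or_ne (cvals k h i j') 0 with hc | hc
  · rw [hc] at hval; norm_num at hval
  · have hs := svals_eq_of_cvals_ne k h i hki j' hc
    have h2 : ¬ ((q : ℕ) = i - k - 1) := by
      simp only [hq]
      omega
    rw [if_neg h2] at hval
    simp at hval

include hk hki hin in
lemma key2 (j j' : Fin h) (hsj : svals k h i j = i - k) (hsj' : svals k h i j' = i - k)
    (hcc : cvals k h i j ≠ cvals k h i j') :
    subsp n k h i j ≠ subsp n k h i j' := by
  intro heq
  have hlt1 : i - k < n := by omega
  have hlt0 : i - k - 1 < n := by omega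
  set q1 : Fin n := ⟨i - k, hlt1⟩ with hq1
  set q0 : Fin n := ⟨i - k - 1, hlt0⟩ with hq0
  set ψ : (Fin n → ℂ) →ₗ[ℂ] ℂ :=
    (cvals k h i j' : ℂ) • LinearMap.proj q1 - LinearMap.proj q0 with hψ
  have hψval : ∀ x, ψ x = (cvals k h i j' : ℂ) * x q1 - x q0 := by
    intro x; simp [hψ, smul_eq_mul]
  have hker : subsp n k h i j' ≤ LinearMap.ker ψ := by
    rw [subsp, span_le]
    rintro _ ⟨m, rfl⟩
    simp only [SetLike.mem_coe, LinearMap.mem_ker]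
    rw [hψval, vvec_apply, vvec_apply, hsj']
    have e1 : ((q1 : ℕ) = i - k + (m : ℕ)) ↔ ((m : ℕ) = 0) := by
      simp only [hq1]; omega
    have e2 : ¬ ((q1 : ℕ) = i - k - 1) := by simp only [hq1]; omega
    have e3 : ¬ ((q0 : ℕ) = i - k + (m : ℕ)) := by simp only [hq0]; omega
    have e4 : ((q0 : ℕ) = i - k - 1) := rfl
    have e5 : ¬ (i - k - 1 = i - k) := by omega
    rcases eq_or_ne (m : ℕ) 0 with hm | hm
    · simp [hm, e2, e3, e4, e5, if_pos (e1.mpr hm), (show (q1 : ℕ) = i - k from rfl), (show ¬ (i - k = i - k - 1) from fun hx => e5 hx.symm)]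
    · rw [if_neg (fun hx => hm (e1.mp hx)), if_neg hm, if_neg e3, if_neg hm]
      ring
  have hmem : vvec n k h i j ⟨0, hk⟩ ∈ subsp n k h i j := subset_span ⟨_, rfl⟩
  rw [heq] at hmem
  have hval := hker hmem
  rw [LinearMap.mem_ker, hψval, vvec_apply, vvec_apply, hsj] at hval
  have e1 : ((q1 : ℕ) = i - k + ((⟨0, hk⟩ : Fin k) : ℕ)) := by simp [hq1]
  have e2 : ¬ ((q1 : ℕ) = i - k - 1) := by simp only [hq1]; omega
  have e3 : ¬ ((q0 : ℕ) = i - k + ((⟨0, hk⟩ : Fin k) : ℕ)) := by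
    simp only [hq0]; omega
  have e4 : ((q0 : ℕ) = i - k - 1) := rfl
  rw [if_pos e1, if_neg e3, if_pos rfl, if_pos rfl, if_neg e2, if_pos e4] at hval
  have : (cvals k h i j : ℂ) = (cvals k h i j' : ℂ) := by
    linear_combination -hval
  exact hcc (Nat.cast_injective this)

include hk hki hin in
lemma subsp_injective : Function.Injective (subsp n k h i) := by
  intro j j' heq
  by_contra hne
  rcases lt_trichotomy (svals k h i j) (svals k h i j') with hlt | heqs | hgt
  · exact key1 n k h i hk hki hin j j' hlt heq
  · by_cases hcase : (j : ℕ) * k < i - k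
    · have hsj : svals k h i j = (j : ℕ) * k := by unfold svals; omega
      have hsj' : (j' : ℕ) * k < i - k := by
        unfold svals at heqs; omega
      have : (j : ℕ) * k = (j' : ℕ) * k := by unfold svals at heqs; omega
      have : (j : ℕ) = (j' : ℕ) := Nat.eq_of_mul_eq_mul_right hk this
      exact hne (Fin.ext this)
    · have hsj : svals k h i j = i - k := by unfold svals; omega
      have hj'k : ¬ ((j' : ℕ) * k < i - k) := by
        unfold svals at heqs; omega
      have hsj' : svals k h i j' = i - k := by unfold svals; omega
      have hjj' : (j : ℕ) * k ≠ (j' : ℕ) * k := by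
        intro hx
        exact hne (Fin.ext (Nat.eq_of_mul_eq_mul_right hk hx))
      have hcc : cvals k h i j ≠ cvals k h i j' := by
        unfold cvals; omega
      exact key2 n k h i hk hki hin j j' hsj hsj' hcc heq
  · exact (key1 n k h i hk hki hin j' j hgt heq.symm).elim

end constr2

section constr3

variable (n k h i : ℕ) (hk : 0 < k) (hki : k + 1 ≤ i) (hin : i ≤ n) (hih : i ≤ h * k)
  (hh : 2 ≤ h)

include hk hki hin hih hh in
lemma subsp_iSup :
    (⨆ j, subsp n k h i j) = span ℂ (Set.range (fun p : Fin i => dv n p)) := by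
  apply le_antisymm
  · apply iSup_le
    intro j
    rw [subsp, span_le]
    rintro _ ⟨m, rfl⟩
    have hm1 : svals k h i j + (m : ℕ) < i := by
      have h1 : svals k h i j ≤ i - k := min_le_right _ _
      have := m.2
      omega
    have hd1 : dv n (svals k h i j + (m : ℕ)) ∈
        span ℂ (Set.range (fun p : Fin i => dv n p)) :=
      subset_span ⟨⟨_, hm1⟩, rfl⟩
    have hd2 : dv n (i - k - 1) ∈ span ℂ (Set.range (fun p : Fin i => dv n p)) :=
      subset_span ⟨⟨i - k - 1, by omega⟩, rfl⟩
    refine add_mem hd1 (smul_mem _ _ ?_)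
    split
    · exact hd2
    · exact zero_mem _
  · rw [span_le]
    rintro _ ⟨p, rfl⟩
    have hlast : h - 1 < h := by omega
    have hslast : svals k h i ⟨h - 1, hlast⟩ = i - k := by
      have h1 : (h - 1) * k = h * k - k := by rw [Nat.sub_mul, one_mul]
      unfold svals
      simp only []
      omega
    have hclimb1 : ∀ p' : ℕ, p' < i - k → dv n p' ∈ ⨆ j, subsp n k h i j := by
      intro p' hp'
      have hj' : p' / k < h := by
        by_contra hx
        push_neg at hx
        have h1 : h * k ≤ (p' / k) * k := Nat.mul_le_mul_right k hx
        have h2 : (p' / k) * k ≤ p' := Nat.div_mul_le_self p' k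
        omega
      have hdm : p' / k * k ≤ p' := Nat.div_mul_le_self p' k
      have hmod : p' % k < k := Nat.mod_lt _ hk
      have hdam : p' / k * k + p' % k = p' := Nat.div_add_mod' p' k
      set j' : Fin h := ⟨p' / k, hj'⟩ with hj'def
      set m : Fin k := ⟨p' % k, hmod⟩ with hmdef
      have hs : svals k h i j' = p' / k * k := by
        unfold svals
        simp only [hj'def]
        omega
      have hc : cvals k h i j' = 0 := by
        unfold cvals
        simp only [hj'def]
        omega
      have hv : vvec n k h i j' m = dv n p' := by
        unfold vvec
        rw [hs, hc]
        simp only [Nat.cast_zero, zero_smul, add_zero, hmdef]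
        rw [hdam]
      exact hv ▸ le_iSup (subsp n k h i) j' (subset_span ⟨m, rfl⟩)
    have hclast : ∀ x, x ∈ Set.range (vvec n k h i ⟨h - 1, hlast⟩) →
        x ∈ ⨆ j, subsp n k h i j :=
      fun x hx => le_iSup (subsp n k h i) ⟨h - 1, hlast⟩ (subset_span hx)
    simp only [SetLike.mem_coe]
    rcases lt_trichotomy (p : ℕ) (i - k) with hc1 | hc2 | hc3
    · exact hclimb1 _ hc1
    · have h0 : vvec n k h i ⟨h - 1, hlast⟩ ⟨0, hk⟩ =
          dv n (i - k) + (cvals k h i ⟨h - 1, hlast⟩ : ℂ) • dv n (i - k - 1) := by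
        unfold vvec
        rw [hslast]
        simp
      have : dv n (p : ℕ) = vvec n k h i ⟨h - 1, hlast⟩ ⟨0, hk⟩ -
          (cvals k h i ⟨h - 1, hlast⟩ : ℂ) • dv n (i - k - 1) := by
        rw [h0, hc2]
        abel
      rw [this]
      exact sub_mem (hclast _ ⟨_, rfl⟩)
        (smul_mem _ _ (hclimb1 (i - k - 1) (by omega)))
    · have hmlt : (p : ℕ) - (i - k) < k := by
        have := p.2
        omega
      have hv : vvec n k h i ⟨h - 1, hlast⟩ ⟨(p : ℕ) - (i - k), hmlt⟩ = dv n (p : ℕ) := by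
        unfold vvec
        rw [hslast]
        have hne : ¬ (((⟨(p : ℕ) - (i - k), hmlt⟩ : Fin k) : ℕ) = 0) := by
          simp only []
          omega
        rw [if_neg hne]
        simp only [smul_zero, add_zero]
        have harg : i - k + ((p : ℕ) - (i - k)) = (p : ℕ) := by omega
        rw [Fin.val_mk, harg]
      exact hv ▸ hclast _ ⟨_, rfl⟩

end constr3

lemma finrank_sup_le_aux {n h k : ℕ} (f : Fin h → Submodule ℂ (Fin n → ℂ))
    (hf : ∀ j, finrank ℂ (f j) = k) :
    finrank ℂ ↥(⨆ j, f j) ≤ h * k := by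
  have main : ∀ s : Finset (Fin h), finrank ℂ ↥(s.sup f) ≤ s.card * k := by
    intro s
    induction s using Finset.induction_on with
    | empty => simp
    | insert _ _ hns ih =>
      rename_i a s
      rw [Finset.sup_insert, Finset.card_insert_of_notMem hns]
      calc finrank ℂ ↥(f a ⊔ s.sup f) ≤ finrank ℂ (f a) + finrank ℂ ↥(s.sup f) :=
            Submodule.finrank_add_le_finrank_add_finrank _ _
      _ ≤ k + s.card * k := by rw [hf a]; omega
      _ = (s.card + 1) * k := by ring
  have huniv : (⨆ j, f j) = Finset.univ.sup f := by
    rw [Finset.sup_eq_iSup]; simp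
  rw [huniv]
  simpa using main Finset.univ

lemma finrank_span_dv (n i : ℕ) (hin : i ≤ n) :
    finrank ℂ ↥(span ℂ (Set.range (fun p : Fin i => dv n p))) = i := by
  rw [finrank_span_eq_card (li_aux (fun p : Fin i => (p : ℕ))
    (fun p => lt_of_lt_of_le p.2 hin) _ ?_)]
  · simp
  · intro m m'
    rw [dv_apply]
    simp [Fin.ext_iff]


/-- The `i`-th ordered configuration space `F_h^i(k,n)`: `h`-tuples of pairwise
distinct `k`-dimensional subspaces of `ℂ^n` whose sum has dimension `i`. -/
def GrassConfig (n k h i : ℕ) : Set (Fin h → Submodule ℂ (Fin n → ℂ)) :=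
  {f | Function.Injective f ∧ (∀ j, Module.finrank ℂ (f j) = k) ∧
    Module.finrank ℂ ↥(⨆ j, f j) = i}

lemma grassConfig_nonempty (n k h i : ℕ) (hk : 0 < k) (hki : k + 1 ≤ i) (hin : i ≤ n)
    (hih : i ≤ h * k) (hh : 2 ≤ h) : (GrassConfig n k h i).Nonempty := by
  refine ⟨subsp n k h i, subsp_injective n k h i hk hki hin,
    fun j => finrank_subsp n k h i hki hin j, ?_⟩
  rw [subsp_iSup n k h i hk hki hin hih hh]
  exact finrank_span_dv n i hin


/-- For `h ≥ 2`, the configuration space `F_h^i(k,n)` is nonempty if and only if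
`k + 1 ≤ i ≤ min(hk, n)`. -/
theorem grassConfig_nonempty_iff (n k h i : ℕ) (hk : 0 < k) (hkn : k < n) (hh : 2 ≤ h) :
    (GrassConfig n k h i).Nonempty ↔ k + 1 ≤ i ∧ i ≤ min (h * k) n := by
  constructor
  · rintro ⟨f, hinj, hrk, hsum⟩
    have hin : i ≤ n := by
      rw [← hsum]
      have := Submodule.finrank_le (⨆ j, f j)
      simpa [Module.finrank_pi] using this
    have hih : i ≤ h * k := by
      rw [← hsum]
      exact finrank_sup_le_aux f hrk
    have hlow : k + 1 ≤ i := by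
      have h01 : (⟨0, by omega⟩ : Fin h) ≠ ⟨1, by omega⟩ := by
        simp [Fin.ext_iff]
      have hne := hinj.ne h01
      have hlt : f ⟨0, by omega⟩ < f ⟨0, by omega⟩ ⊔ f ⟨1, by omega⟩ := by
        refine lt_of_le_of_ne le_sup_left fun hx => hne ?_
        have hle : f ⟨1, by omega⟩ ≤ f ⟨0, by omega⟩ := by
          rw [hx]; exact le_sup_right
        exact ((Submodule.eq_of_le_of_finrank_le hle
          (by rw [hrk, hrk])).symm)
      have h2 := Submodule.finrank_lt_finrank_of_lt hlt
      rw [hrk] at h2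
      have h3 : f ⟨0, by omega⟩ ⊔ f ⟨1, by omega⟩ ≤ ⨆ j, f j :=
        sup_le (le_iSup f _) (le_iSup f _)
      have h4 := Submodule.finrank_mono h3
      omega
    exact ⟨hlow, le_min hih hin⟩
  · rintro ⟨h1, h2⟩
    exact grassConfig_nonempty n k h i hk h1 (le_of_le_of_eq (h2.trans (min_le_right _ _)) rfl)
      (h2.trans (min_le_left _ _)) hh
end

section
/- For h ≥ 2, the adjacency of strata holds: the closure of F_h^i(k,n) in F_h(Gr(k,n)) equals the disjoint union of F_h^j(k,n) for 2 ≤ j ≤ i; in particular, every point of F_h^{i-1}(k,n) is a limit of points of F_h^i(k,n) whenever both strata are nonempty. -/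
/-- The natural topology on the set of subspaces of `ℂ^n`, induced by sending a
subspace to the orthogonal projection onto it. -/
noncomputable instance grassTop (n : ℕ) :
    TopologicalSpace (Submodule ℂ (EuclideanSpace ℂ (Fin n))) :=
  TopologicalSpace.induced
    (fun K => (K.subtypeL.comp K.orthogonalProjection :
      EuclideanSpace ℂ (Fin n) →L[ℂ] EuclideanSpace ℂ (Fin n))) inferInstance

/-- The ordered configuration space `F_h(Gr(k,n))` of `h` distinct points of the
Grassmannian `Gr(k,n)`, with its natural topology. -/
def GrassTuple (n k h : ℕ) :=
  {f : Fin h → Submodule ℂ (EuclideanSpace ℂ (Fin n)) //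
    Function.Injective f ∧ ∀ j, Module.finrank ℂ (f j) = k}

noncomputable instance (n k h : ℕ) : TopologicalSpace (GrassTuple n k h) :=
  instTopologicalSpaceSubtype

/-- The dimension of the sum of the subspaces of a configuration. -/
noncomputable def sumDim {n k h : ℕ} (x : GrassTuple n k h) : ℕ :=
  Module.finrank ℂ ↥(⨆ j, x.1 j)

noncomputable section
open Module Submodule


variable {n : ℕ}

local notation "E" => EuclideanSpace ℂ (Fin n)

def pr (K : Submodule ℂ (EuclideanSpace ℂ (Fin n))) :
    EuclideanSpace ℂ (Fin n) →L[ℂ] EuclideanSpace ℂ (Fin n) :=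
  K.subtypeL.comp K.orthogonalProjection

lemma pr_mem (K : Submodule ℂ E) (v : E) : pr K v ∈ K := (orthogonalProjection K v).2

lemma pr_eq_self (K : Submodule ℂ E) {v : E} (hv : v ∈ K) : pr K v = v := by
  exact (Submodule.starProjection_eq_self_iff (K := K)).2 hv

lemma pr_eq_zero (K : Submodule ℂ E) {v : E} (hv : v ∈ Kᗮ) : pr K v = 0 := by
  have := orthogonalProjection_mem_subspace_orthogonalComplement_eq_zero hv
  simp [pr, this]

lemma sub_pr_mem (K : Submodule ℂ E) (v : E) : v - pr K v ∈ Kᗮ :=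
  K.sub_starProjection_mem_orthogonal v

lemma inner_pr_self (K : Submodule ℂ E) (v : E) :
    inner (𝕜 := ℂ) v (pr K v) = (‖pr K v‖ : ℂ) ^ 2 := by
  have h1 : inner (𝕜 := ℂ) (v - pr K v) (pr K v) = 0 :=
    (sub_pr_mem K v) (pr K v) (pr_mem K v) |> fun h => by
      rw [inner_eq_zero_symm]; exact h
  have h2 := inner_sub_left (𝕜 := ℂ) v (pr K v) (pr K v)
  rw [h1] at h2
  rw [sub_eq_zero.mp h2.symm, inner_self_eq_norm_sq_to_K]
  norm_num

variable {h : ℕ}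

lemma sum_pr_eq_zero_iff (f : Fin h → Submodule ℂ E) (v : E) :
    (∑ j, pr (f j)) v = 0 ↔ v ∈ (⨆ j, f j)ᗮ := by
  constructor
  · intro hv
    have h0 : inner (𝕜 := ℂ) v ((∑ j, pr (f j)) v) = 0 := by rw [hv, inner_zero_right]
    rw [ContinuousLinearMap.sum_apply, inner_sum] at h0
    have h1 : ∀ j ∈ Finset.univ, inner (𝕜 := ℂ) v (pr (f j) v) = (‖pr (f j) v‖ : ℂ) ^ 2 :=
      fun j _ => inner_pr_self (f j) v
    rw [Finset.sum_congr rfl h1] at h0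
    have h2 : (∑ j, (‖pr (f j) v‖ : ℝ) ^ 2) = 0 := by
      have := congrArg Complex.re h0
      simpa [← Complex.ofReal_pow] using this
    have h3 : ∀ j ∈ Finset.univ, pr (f j) v = 0 := by
      intro j _
      have := (Finset.sum_eq_zero_iff_of_nonneg
        (fun j _ => sq_nonneg (‖pr (f j) v‖))).mp h2 j (Finset.mem_univ j)
      have hn : ‖pr (f j) v‖ = 0 := by nlinarith [norm_nonneg (pr (f j) v)]
      exact norm_eq_zero.mp hn
    rw [← Submodule.iInf_orthogonal]
    rw [Submodule.mem_iInf]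
    intro j
    have := sub_pr_mem (f j) v
    rwa [h3 j (Finset.mem_univ j), sub_zero] at this
  · intro hv
    rw [ContinuousLinearMap.sum_apply]
    apply Finset.sum_eq_zero
    intro j _
    exact pr_eq_zero (f j) (Submodule.orthogonal_le (le_iSup f j) hv)

lemma range_sum_pr (f : Fin h → Submodule ℂ E) :
    LinearMap.range
      (((∑ j, pr (f j) : EuclideanSpace ℂ (Fin n) →L[ℂ] EuclideanSpace ℂ (Fin n))) :
        EuclideanSpace ℂ (Fin n) →ₗ[ℂ] EuclideanSpace ℂ (Fin n))
      = ⨆ j, f j := by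
  set T : EuclideanSpace ℂ (Fin n) →ₗ[ℂ] EuclideanSpace ℂ (Fin n) :=
    ((∑ j, pr (f j) : EuclideanSpace ℂ (Fin n) →L[ℂ] EuclideanSpace ℂ (Fin n)) :
      EuclideanSpace ℂ (Fin n) →ₗ[ℂ] EuclideanSpace ℂ (Fin n))
  have hle : LinearMap.range T ≤ ⨆ j, f j := by
    rintro _ ⟨v, rfl⟩
    have : T v = ∑ j, pr (f j) v := by
      simp [T, ContinuousLinearMap.sum_apply]
    rw [this]
    exact Submodule.sum_mem _ fun j _ => (le_iSup f j) (pr_mem (f j) v)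
  have hker : LinearMap.ker T = (⨆ j, f j)ᗮ := by
    ext v
    exact sum_pr_eq_zero_iff f v
  have h1 := LinearMap.finrank_range_add_finrank_ker T
  rw [hker] at h1
  have h2 := Submodule.finrank_add_finrank_orthogonal (K := ⨆ j, f j)
  apply Submodule.eq_of_le_of_finrank_le hle
  omega


lemma continuous_pr : Continuous (pr (n := n)) := continuous_induced_dom

lemma continuous_config_pr {k : ℕ} (j : Fin h) :
    Continuous fun y : GrassTuple n k h => pr (y.1 j) :=
  continuous_pr.comp ((continuous_apply j).comp continuous_subtype_val)

lemma exists_open_sumDim_le {k : ℕ} (x : GrassTuple n k h) :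
    ∃ U : Set (GrassTuple n k h), IsOpen U ∧ x ∈ U ∧ ∀ y ∈ U, sumDim x ≤ sumDim y := by
  classical
  have hrange := range_sum_pr (f := x.1)
  have hfr : Module.finrank ℂ
      (LinearMap.range
        (((∑ j, pr (x.1 j) : EuclideanSpace ℂ (Fin n) →L[ℂ] EuclideanSpace ℂ (Fin n))) :
          EuclideanSpace ℂ (Fin n) →ₗ[ℂ] EuclideanSpace ℂ (Fin n))) = sumDim x := by
    rw [hrange]; rfl
  set R := LinearMap.range
        (((∑ j, pr (x.1 j) : EuclideanSpace ℂ (Fin n) →L[ℂ] EuclideanSpace ℂ (Fin n))) :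
          EuclideanSpace ℂ (Fin n) →ₗ[ℂ] EuclideanSpace ℂ (Fin n)) with hR
  obtain b := Module.finBasisOfFinrankEq ℂ R hfr
  have hmem : ∀ s, ∃ v, (∑ j, pr (x.1 j)) v = (b s : EuclideanSpace ℂ (Fin n)) := by
    intro s
    exact (b s).2
  choose w hw using hmem
  have li : LinearIndependent ℂ fun s => (∑ j, pr (x.1 j)) (w s) := by
    have : (fun s => (∑ j, pr (x.1 j)) (w s)) = fun s => ((b s : EuclideanSpace ℂ (Fin n))) := by
      funext s; exact hw s
    rw [this]
    exact b.linearIndependent.map' R.subtype (Submodule.ker_subtype R)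
  set F : GrassTuple n k h → (Fin (sumDim x) → EuclideanSpace ℂ (Fin n)) :=
    fun y s => (∑ j, pr (y.1 j)) (w s) with hF
  have hFc : Continuous F := by
    apply continuous_pi
    intro s
    have : (fun y : GrassTuple n k h => (∑ j, pr (y.1 j)) (w s)) =
        fun y : GrassTuple n k h => ∑ j, pr (y.1 j) (w s) := by
      funext y; simp [ContinuousLinearMap.sum_apply]
    rw [hF]; rw [this]
    exact continuous_finset_sum _ fun j _ =>
      (ContinuousLinearMap.apply ℂ (EuclideanSpace ℂ (Fin n)) (w s)).continuous.comp
        (continuous_config_pr j)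
  refine ⟨F ⁻¹' {g | LinearIndependent ℂ g}, isOpen_setOf_linearIndependent.preimage hFc, li, ?_⟩
  intro y hy
  have hspan : Submodule.span ℂ (Set.range (F y)) ≤ ⨆ j, y.1 j := by
    rw [Submodule.span_le]
    rintro _ ⟨s, rfl⟩
    have : F y s = ∑ j, pr (y.1 j) (w s) := by simp [hF, ContinuousLinearMap.sum_apply]
    rw [this]
    exact Submodule.sum_mem _ fun j _ => (le_iSup y.1 j) (pr_mem (y.1 j) (w s))
  have h1 : Module.finrank ℂ (Submodule.span ℂ (Set.range (F y))) = sumDim x := by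
    rw [finrank_span_eq_card hy]
    simp
  calc sumDim x = Module.finrank ℂ (Submodule.span ℂ (Set.range (F y))) := h1.symm
    _ ≤ Module.finrank ℂ ↥(⨆ j, y.1 j) := Submodule.finrank_mono hspan

lemma le_sumDim {k : ℕ} (hk : 0 < k) (hh : 2 ≤ h) (x : GrassTuple n k h) :
    k + 1 ≤ sumDim x := by
  have h01 : (⟨0, by omega⟩ : Fin h) ≠ ⟨1, by omega⟩ := by
    simp [Fin.ext_iff]
  have key : ∀ j : Fin h, x.1 j ≤ ⨆ j', x.1 j' := fun j => le_iSup x.1 j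
  by_contra hcon
  push_neg at hcon
  have heq : ∀ j : Fin h, x.1 j = ⨆ j', x.1 j' := by
    intro j
    apply Submodule.eq_of_le_of_finrank_le (key j)
    have : Module.finrank ℂ (x.1 j) = k := x.2.2 j
    rw [this]
    have hs : sumDim x = Module.finrank ℂ ↥(⨆ j', x.1 j') := rfl
    omega
  exact h01 (x.2.1 ((heq ⟨0, by omega⟩).trans (heq ⟨1, by omega⟩).symm))

lemma exists_dep {k : ℕ} (f : Fin h → Submodule ℂ (EuclideanSpace ℂ (Fin n)))
    (hf : ∀ j, Module.finrank ℂ (f j) = k)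
    (hlt : Module.finrank ℂ ↥(⨆ j, f j) < h * k) :
    ∃ a, f a ⊓ (⨆ b, ⨆ (_ : b ≠ a), f b) ≠ ⊥ := by
  by_contra hcon
  push_neg at hcon
  have key : ∀ s : Finset (Fin h),
      Module.finrank ℂ ↥(s.sup f) = ∑ b ∈ s, Module.finrank ℂ (f b) := by
    intro s
    induction s using Finset.induction_on with
    | empty => simp
    | @insert a s ha ih =>
      rw [Finset.sup_insert, Finset.sum_insert ha]
      have hsub : s.sup f ≤ ⨆ b, ⨆ (_ : b ≠ a), f b := by
        apply Finset.sup_le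
        intro b hb
        have hba : b ≠ a := fun hj => ha (hj ▸ hb)
        exact le_trans (le_iSup (fun _ : b ≠ a => f b) hba)
          (le_iSup (fun b' => ⨆ (_ : b' ≠ a), f b') b)
      have hinf : f a ⊓ s.sup f = ⊥ := by
        rw [← le_bot_iff, ← hcon a]
        exact inf_le_inf_left _ hsub
      have hd := Submodule.finrank_sup_add_finrank_inf_eq (f a) (s.sup f)
      rw [hinf] at hd
      simp only [finrank_bot, add_zero] at hd
      omega
  have hu := key Finset.univ
  rw [Finset.sup_univ_eq_iSup] at hu
  simp only [hf, Finset.sum_const, Finset.card_univ, Fintype.card_fin, smul_eq_mul] at hu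
  have he : (⨆ j, f j) = iSup f := rfl
  rw [he] at hlt
  omega

lemma exists_unit_mem {K : Submodule ℂ (EuclideanSpace ℂ (Fin n))} (hK : K ≠ ⊥) :
    ∃ u, u ∈ K ∧ ‖u‖ = 1 := by
  obtain ⟨v, hv, hv0⟩ := Submodule.exists_mem_ne_zero_of_ne_bot hK
  exact ⟨(‖v‖⁻¹ : ℂ) • v, K.smul_mem _ hv, norm_smul_inv_norm (𝕜 := ℂ) hv0⟩

/-- rank-one operator `x ↦ ⟪u, x⟫ • u` -/
def rk1 (u : EuclideanSpace ℂ (Fin n)) :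
    EuclideanSpace ℂ (Fin n) →L[ℂ] EuclideanSpace ℂ (Fin n) :=
  (innerSL ℂ u).smulRight u

lemma continuous_rk1 : Continuous (rk1 (n := n)) := by
  rw [continuous_clm_apply]
  intro y
  simp only [rk1, ContinuousLinearMap.smulRight_apply, innerSL_apply_apply]
  exact (Continuous.inner (𝕜 := ℂ) continuous_id continuous_const).smul continuous_id

lemma pr_span_sup {u : EuclideanSpace ℂ (Fin n)} (hu : ‖u‖ = 1)
    {D : Submodule ℂ (EuclideanSpace ℂ (Fin n))} (hud : u ∈ Dᗮ) :
    pr ((ℂ ∙ u) ⊔ D) = rk1 u + pr D := by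
  apply ContinuousLinearMap.ext
  intro v
  have huu : inner (𝕜 := ℂ) u u = 1 := by
    rw [inner_self_eq_norm_sq_to_K, hu]; norm_num
  have hw : (inner (𝕜 := ℂ) u v) • u + pr D v ∈ (ℂ ∙ u) ⊔ D :=
    Submodule.add_mem _
      (Submodule.mem_sup_left (Submodule.smul_mem _ _ (Submodule.mem_span_singleton_self u)))
      (Submodule.mem_sup_right (pr_mem D v))
  have horth : v - ((inner (𝕜 := ℂ) u v) • u + pr D v) ∈ ((ℂ ∙ u) ⊔ D)ᗮ := by
    rw [← Submodule.inf_orthogonal]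
    refine Submodule.mem_inf.mpr ⟨?_, ?_⟩
    · rw [Submodule.mem_orthogonal_singleton_iff_inner_right]
      have h1 : inner (𝕜 := ℂ) u (pr D v) = 0 := by
        rw [inner_eq_zero_symm]
        exact hud (pr D v) (pr_mem D v)
      rw [inner_sub_right, inner_add_right, inner_smul_right, huu, h1]
      ring
    · have : v - ((inner (𝕜 := ℂ) u v) • u + pr D v)
          = (v - pr D v) - (inner (𝕜 := ℂ) u v) • u := by module
      rw [this]
      exact Submodule.sub_mem _ (sub_pr_mem D v) (Submodule.smul_mem _ _ hud)
  have := Submodule.eq_starProjection_of_mem_orthogonal (K := (ℂ ∙ u) ⊔ D) hw horth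
  show ((ℂ ∙ u) ⊔ D).starProjection v = _
  rw [this]
  simp [rk1]

set_option maxHeartbeats 2000000 in
lemma step_closure {k : ℕ} (hk : 0 < k) (x : GrassTuple n k h)
    (hlt1 : sumDim x < h * k) (hlt2 : sumDim x < n) :
    x ∈ closure {y : GrassTuple n k h | sumDim y = sumDim x + 1} := by
  classical
  set V : Submodule ℂ (EuclideanSpace ℂ (Fin n)) := ⨆ j, x.1 j with hV
  have hVfr : Module.finrank ℂ V = sumDim x := rfl
  obtain ⟨a, ha⟩ := exists_dep x.1 x.2.2 hlt1
  obtain ⟨u, hu, hu1⟩ := exists_unit_mem ha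
  have hua : u ∈ x.1 a := hu.1
  have huW : u ∈ ⨆ b, ⨆ (_ : b ≠ a), x.1 b := hu.2
  have hu0 : u ≠ 0 := fun h0 => by simp [h0] at hu1
  have huV : u ∈ V := (le_iSup x.1 a) hua
  -- a unit vector orthogonal to V
  have hVne : V ≠ ⊤ := by
    intro htop
    rw [htop, finrank_top, finrank_euclideanSpace_fin] at hVfr
    omega
  have hVbot : Vᗮ ≠ ⊥ := fun hbot => hVne (Submodule.orthogonal_eq_bot_iff.mp hbot)
  obtain ⟨w, hwV, hw1⟩ := exists_unit_mem hVbot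
  have hw0 : w ≠ 0 := fun h0 => by simp [h0] at hw1
  have hwnotV : w ∉ V := by
    intro hmem
    have : inner (𝕜 := ℂ) w w = 0 := hwV w hmem
    rw [inner_self_eq_zero] at this
    exact hw0 this
  have huu : inner (𝕜 := ℂ) u u = 1 := by
    rw [inner_self_eq_norm_sq_to_K, hu1]; norm_num
  have hww : inner (𝕜 := ℂ) w w = 1 := by
    rw [inner_self_eq_norm_sq_to_K, hw1]; norm_num
  have huw : inner (𝕜 := ℂ) u w = 0 := hwV u huV
  have hwu : inner (𝕜 := ℂ) w u = 0 := by
    rw [inner_eq_zero_symm] at huw; exact huw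
  -- the orthogonal complement of u inside x.1 a
  set D : Submodule ℂ (EuclideanSpace ℂ (Fin n)) := x.1 a ⊓ (ℂ ∙ u)ᗮ with hD
  have hDperp : u ∈ Dᗮ := by
    have h' : (ℂ ∙ u)ᗮᗮ ≤ Dᗮ := Submodule.orthogonal_le inf_le_right
    exact h' (by rw [Submodule.orthogonal_orthogonal]; exact Submodule.mem_span_singleton_self u)
  have hDa : D ≤ x.1 a := inf_le_left
  have hwDperp : w ∈ Dᗮ :=
    Submodule.orthogonal_le (le_trans hDa (le_iSup x.1 a)) hwV
  have hfa : x.1 a = (ℂ ∙ u) ⊔ D := by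
    apply le_antisymm
    · intro v hv
      have hv2 : v - inner (𝕜 := ℂ) u v • u ∈ D := by
        refine Submodule.mem_inf.mpr ⟨Submodule.sub_mem _ hv (Submodule.smul_mem _ _ hua), ?_⟩
        rw [Submodule.mem_orthogonal_singleton_iff_inner_right]
        rw [inner_sub_right, inner_smul_right, huu]
        ring
      have hdec : v = inner (𝕜 := ℂ) u v • u + (v - inner (𝕜 := ℂ) u v • u) := by module
      rw [hdec]
      exact Submodule.add_mem _
        (Submodule.mem_sup_left (Submodule.smul_mem _ _ (Submodule.mem_span_singleton_self u)))
        (Submodule.mem_sup_right hv2)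
    · exact sup_le ((Submodule.span_singleton_le_iff_mem u _).mpr hua) hDa
  have hfrk : Module.finrank ℂ (x.1 a) = k := x.2.2 a
  have hinfuD : (ℂ ∙ u) ⊓ D = ⊥ := by
    rw [← le_bot_iff, ← Submodule.inf_orthogonal_eq_bot (ℂ ∙ u)]
    exact inf_le_inf_left _ inf_le_right
  have hkD : 1 + Module.finrank ℂ D = k := by
    have hd := Submodule.finrank_sup_add_finrank_inf_eq (ℂ ∙ u) D
    rw [hinfuD, ← hfa, hfrk, finrank_span_singleton hu0] at hd
    simpa using hd.symm
  -- the rotated vectors and subspaces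
  set ut : ℝ → EuclideanSpace ℂ (Fin n) :=
    fun t => (Real.cos t : ℂ) • u + (Real.sin t : ℂ) • w with hut
  have hut0 : ut 0 = u := by simp [hut]
  have hut_norm : ∀ t, ‖ut t‖ = 1 := by
    intro t
    have hinner : inner (𝕜 := ℂ) (ut t) (ut t) = 1 := by
      simp only [hut, inner_add_add_self, inner_smul_left, inner_smul_right, huu, hww, huw, hwu,
        Complex.conj_ofReal, mul_one, mul_zero, add_zero, zero_add]
      norm_cast
      nlinarith [Real.sin_sq_add_cos_sq t]
    have h3 : (‖ut t‖ : ℝ) ^ 2 = 1 := by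
      rw [← inner_self_eq_norm_sq (𝕜 := ℂ), hinner]; simp
    nlinarith [norm_nonneg (ut t)]
  have hut_perpD : ∀ t, ut t ∈ Dᗮ := fun t =>
    Submodule.add_mem _ (Submodule.smul_mem _ _ hDperp) (Submodule.smul_mem _ _ hwDperp)
  set g : ℝ → Submodule ℂ (EuclideanSpace ℂ (Fin n)) := fun t => (ℂ ∙ ut t) ⊔ D with hg
  have hg0 : g 0 = x.1 a := by rw [hg]; simp only [hut0]; exact hfa.symm
  have hut_ne : ∀ t, ut t ≠ 0 := fun t h0 => by
    have := hut_norm t; rw [h0] at this; simp at this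
  have hgfr : ∀ t, Module.finrank ℂ (g t) = k := by
    intro t
    have hinf : (ℂ ∙ ut t) ⊓ D = ⊥ := by
      rw [← le_bot_iff]
      intro z hz
      have hz1 : z ∈ Dᗮ := (Submodule.span_singleton_le_iff_mem _ _).mpr (hut_perpD t) hz.1
      have : z ∈ D ⊓ Dᗮ := ⟨hz.2, hz1⟩
      rwa [Submodule.inf_orthogonal_eq_bot D] at this
    have hd := Submodule.finrank_sup_add_finrank_inf_eq (ℂ ∙ ut t) D
    rw [hinf, finrank_span_singleton (hut_ne t)] at hd
    simp only [finrank_bot, add_zero] at hd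
    show Module.finrank ℂ ↥((ℂ ∙ ut t) ⊔ D) = k
    omega
  -- the perturbed configurations
  set f : ℝ → Fin h → Submodule ℂ (EuclideanSpace ℂ (Fin n)) :=
    fun t => Function.update x.1 a (g t) with hf
  have hut_notV : ∀ t, Real.sin t ≠ 0 → ut t ∉ V := by
    intro t hs hmem
    have h1 : (Real.sin t : ℂ) • w = ut t - (Real.cos t : ℂ) • u := by
      simp only [hut]; module
    have h2 : (Real.sin t : ℂ) • w ∈ V := by
      rw [h1]; exact Submodule.sub_mem _ hmem (Submodule.smul_mem _ _ huV)
    have h3 : w ∈ V := by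
      have := Submodule.smul_mem V ((Real.sin t : ℂ))⁻¹ h2
      rwa [smul_smul, inv_mul_cancel₀ (by exact_mod_cast hs), one_smul] at this
    exact hwnotV h3
  have hfeq : ∀ t, f t a = g t := fun t => Function.update_self a (g t) x.1
  have hfne : ∀ t, ∀ b, b ≠ a → f t b = x.1 b := fun t b hb => Function.update_of_ne hb (g t) x.1
  have hinj : ∀ t, Real.sin t ≠ 0 → Function.Injective (f t) := by
    intro t hs c d hcd
    have hgV : ∀ b, b ≠ a → g t ≠ x.1 b := by
      intro b hb hgb
      apply hut_notV t hs
      have : ut t ∈ g t := Submodule.mem_sup_left (Submodule.mem_span_singleton_self _)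
      rw [hgb] at this
      exact (le_iSup x.1 b) this
    rcases eq_or_ne c a with hc | hc
    · rcases eq_or_ne d a with hd | hd
      · rw [hc, hd]
      · exfalso
        rw [hc, hfeq t, hfne t d hd] at hcd
        exact hgV d hd hcd
    · rcases eq_or_ne d a with hd | hd
      · exfalso
        rw [hd, hfeq t, hfne t c hc] at hcd
        exact hgV c hc hcd.symm
      · rw [hfne t c hc, hfne t d hd] at hcd
        exact x.2.1 hcd
  have hranks : ∀ t, ∀ j, Module.finrank ℂ ((f t) j) = k := by
    intro t j
    rcases eq_or_ne j a with hj | hj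
    · rw [hj, hfeq t]; exact hgfr t
    · rw [hfne t j hj]; exact x.2.2 j
  -- the span of the perturbed configuration
  have hsup : ∀ t, Real.sin t ≠ 0 → (⨆ j, (f t) j) = V ⊔ (ℂ ∙ w) := by
    intro t hs
    have huS : u ∈ ⨆ j, (f t) j := by
      have hW : (⨆ b, ⨆ (_ : b ≠ a), x.1 b) ≤ ⨆ j, (f t) j := by
        refine iSup_le fun b => iSup_le fun hb => ?_
        rw [← hfne t b hb]
        exact le_iSup (f t) b
      exact hW huW
    have hutS : ut t ∈ ⨆ j, (f t) j := by
      have hle : g t ≤ ⨆ j, (f t) j := by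
        rw [← hfeq t]; exact le_iSup (f t) a
      exact hle (Submodule.mem_sup_left (Submodule.mem_span_singleton_self _))
    have hDS : D ≤ ⨆ j, (f t) j := by
      have h1 : D ≤ g t := le_sup_right
      exact le_trans h1 ((hfeq t) ▸ le_iSup (f t) a)
    have hwS : w ∈ ⨆ j, (f t) j := by
      have h1 : w = ((Real.sin t : ℂ))⁻¹ • (ut t - (Real.cos t : ℂ) • u) := by
        have hsc : (Real.sin t : ℂ) ≠ 0 := by exact_mod_cast hs
        rw [hut]
        simp only
        rw [add_sub_cancel_left, smul_smul, inv_mul_cancel₀ hsc, one_smul]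
      rw [h1]
      exact Submodule.smul_mem _ _ (Submodule.sub_mem _ hutS (Submodule.smul_mem _ _ huS))
    apply le_antisymm
    · refine iSup_le fun j => ?_
      rcases eq_or_ne j a with hj | hj
      · rw [hj, hfeq t, hg]
        apply sup_le
        · rw [Submodule.span_singleton_le_iff_mem]
          exact Submodule.add_mem _
            (Submodule.mem_sup_left (Submodule.smul_mem _ _ huV))
            (Submodule.mem_sup_right (Submodule.smul_mem _ _ (Submodule.mem_span_singleton_self w)))
        · exact le_trans (le_trans hDa (le_iSup x.1 a)) le_sup_left
      · rw [hfne t j hj]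
        exact le_trans (le_iSup x.1 j) le_sup_left
    · apply sup_le
      · refine iSup_le fun j => ?_
        rcases eq_or_ne j a with hj | hj
        · rw [hj, hfa]
          apply sup_le
          · rwa [Submodule.span_singleton_le_iff_mem]
          · exact hDS
        · rw [← hfne t j hj]
          exact le_iSup (f t) j
      · rwa [Submodule.span_singleton_le_iff_mem]
  have hdim : Module.finrank ℂ ↥(V ⊔ (ℂ ∙ w)) = sumDim x + 1 := by
    have hinf : V ⊓ (ℂ ∙ w) = ⊥ := by
      rw [← le_bot_iff]
      intro z hz
      obtain ⟨hz1, hz2⟩ := Submodule.mem_inf.mp hz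
      rw [Submodule.mem_span_singleton] at hz2
      obtain ⟨c, rfl⟩ := hz2
      rcases eq_or_ne c 0 with rfl | hc
      · simp
      · exfalso
        apply hwnotV
        have := Submodule.smul_mem V c⁻¹ hz1
        rwa [smul_smul, inv_mul_cancel₀ hc, one_smul] at this
    have hd := Submodule.finrank_sup_add_finrank_inf_eq V (ℂ ∙ w)
    rw [hinf, finrank_span_singleton hw0, hVfr] at hd
    simpa using hd
  -- the projection formulas
  have hprg : ∀ t, pr (g t) = rk1 (ut t) + pr D := by
    intro t
    rw [hg]
    exact pr_span_sup (hut_norm t) (hut_perpD t)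
  have hpra : pr (x.1 a) = rk1 u + pr D := by
    rw [hfa]
    exact pr_span_sup hu1 hDperp
  -- the sequence of times
  set ts : ℕ → ℝ := fun m => ((m : ℝ) + 1)⁻¹ with hts
  have hts_pos : ∀ m, 0 < ts m := fun m => by positivity
  have hts_le : ∀ m, ts m ≤ 1 := by
    intro m
    rw [hts]
    simp only
    rw [inv_le_one_iff₀]
    right
    have : (0:ℝ) ≤ (m:ℝ) := Nat.cast_nonneg m
    linarith
  have hsin : ∀ m, Real.sin (ts m) ≠ 0 := by
    intro m
    have hlt : ts m < Real.pi := lt_of_le_of_lt (hts_le m) (by linarith [Real.pi_gt_three])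
    exact ne_of_gt (Real.sin_pos_of_pos_of_lt_pi (hts_pos m) hlt)
  set Y : ℕ → GrassTuple n k h := fun m => ⟨f (ts m), hinj _ (hsin m), hranks _⟩ with hY
  have hYdim : ∀ m, sumDim (Y m) = sumDim x + 1 := by
    intro m
    show Module.finrank ℂ ↥(⨆ j, f (ts m) j) = sumDim x + 1
    rw [hsup _ (hsin m)]
    exact hdim
  -- convergence
  have hindu : @Topology.IsInducing _ _ (grassTop n) _ (pr (n := n)) := ⟨rfl⟩
  have htend : Filter.Tendsto Y Filter.atTop (nhds x) := by
    apply tendsto_subtype_rng.mpr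
    rw [tendsto_pi_nhds]
    intro j
    rcases eq_or_ne j a with hj | hj
    · rw [hj]
      have he : (fun m => (Y m).1 a) = fun m => g (ts m) := funext fun m => hfeq (ts m)
      rw [he, hindu.tendsto_nhds_iff]
      have he2 : (fun m => pr (g (ts m))) = fun m => rk1 (ut (ts m)) + pr D :=
        funext fun m => hprg (ts m)
      show Filter.Tendsto (fun m => pr (g (ts m))) Filter.atTop (nhds (pr (x.1 a)))
      rw [he2, hpra]
      have hts0 : Filter.Tendsto ts Filter.atTop (nhds 0) := by
        apply Filter.Tendsto.inv_tendsto_atTop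
        exact Filter.tendsto_atTop_add_const_right _ 1 tendsto_natCast_atTop_atTop
      have hutc : Continuous ut := by
        apply Continuous.add
        · exact (Complex.continuous_ofReal.comp Real.continuous_cos).smul continuous_const
        · exact (Complex.continuous_ofReal.comp Real.continuous_sin).smul continuous_const
      have hutt : Filter.Tendsto (fun m => ut (ts m)) Filter.atTop (nhds u) := by
        have := (hutc.continuousAt (x := 0)).tendsto.comp hts0
        rwa [hut0] at this
      exact ((continuous_rk1.continuousAt.tendsto.comp hutt).add tendsto_const_nhds)
    · have he : (fun m => (Y m).1 j) = fun _ => x.1 j := funext fun m => hfne (ts m) j hj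
      rw [he]
      exact tendsto_const_nhds
  exact mem_closure_of_tendsto htend (Filter.Eventually.of_forall hYdim)



end

/-- For `h ≥ 2` and `k + 1 ≤ i ≤ min(hk,n)`, the adjacency of strata holds: inside the
ordered configuration space `F_h(Gr(k,n))` of `h` distinct `k`-subspaces of `ℂ^n`, the
closure of the stratum `F_h^i(k,n)` is the union of the strata `F_h^j(k,n)` for
`2 ≤ j ≤ i`; in particular every point of `F_h^{i-1}(k,n)` is a limit of points of
`F_h^i(k,n)`. -/
theorem grassConfig_closure (n k h i : ℕ) (hk : 0 < k) (hkn : k < n) (hh : 2 ≤ h)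
    (hik : k + 1 ≤ i) (hi : i ≤ min (h * k) n) :
    closure {x : GrassTuple n k h | sumDim x = i} =
      {x : GrassTuple n k h | 2 ≤ sumDim x ∧ sumDim x ≤ i} ∧
    ∀ x : GrassTuple n k h, sumDim x = i - 1 →
      x ∈ closure {y : GrassTuple n k h | sumDim y = i} := by
  have hi1 : i ≤ h * k := le_trans hi (min_le_left _ _)
  have hi2 : i ≤ n := le_trans hi (min_le_right _ _)
  -- every configuration with sumDim ≤ i is in the closure of the stratum i
  have key : ∀ d : ℕ, ∀ x : GrassTuple n k h, sumDim x + d = i →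
      x ∈ closure {y : GrassTuple n k h | sumDim y = i} := by
    intro d
    induction d with
    | zero =>
      intro x hx
      exact subset_closure (by simpa using hx)
    | succ d ih =>
      intro x hx
      have hx1 : sumDim x < h * k := by omega
      have hx2 : sumDim x < n := by omega
      have hst := step_closure hk x hx1 hx2
      have hsub : {y : GrassTuple n k h | sumDim y = sumDim x + 1} ⊆
          closure {y : GrassTuple n k h | sumDim y = i} := by
        intro y hy
        exact ih y (by simp only [Set.mem_setOf_eq] at hy; omega)
      have := closure_mono hsub
      rw [closure_closure] at this
      exact this hst
  have upward : ∀ x : GrassTuple n k h, sumDim x ≤ i →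
      x ∈ closure {y : GrassTuple n k h | sumDim y = i} := by
    intro x hle
    exact key (i - sumDim x) x (by omega)
  constructor
  · ext x
    simp only [Set.mem_setOf_eq]
    constructor
    · intro hx
      have h2 : 2 ≤ sumDim x := by
        have := le_sumDim hk hh x
        omega
      refine ⟨h2, ?_⟩
      by_contra hcon
      push_neg at hcon
      obtain ⟨U, hUopen, hxU, hUle⟩ := exists_open_sumDim_le x
      obtain ⟨y, hyU, hy⟩ := _root_.mem_closure_iff.mp hx U hUopen hxU
      have := hUle y hyU
      simp only [Set.mem_setOf_eq] at hy
      omega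
    · intro ⟨_, hle⟩
      exact upward x hle
  · intro x hx
    exact upward x (by omega)
end
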